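/- For every ξ ∈ S¹ with ξ·γ_i ≠ 0 for all i = 1, …, m, the following hold: γ(ξ) = 0 if and only if γ^⊥(ξ) = 0; and if γ(ξ) = 0 then γ†(ξ) = 0. (The zero sets of γ and γ^⊥ coincide and are contained in the zero set of γ†.) -/

import Mathlib

noncomputable section

open MeasureTheory

/-- Dot product in `ℝ²`. -/
def dot2 (a b : ℝ × ℝ) : ℝ := a.1 * b.1 + a.2 * b.2

/-- The rotation `w ↦ w^⊥ = (−w2, w1)`. -/
def perp2 (w : ℝ × ℝ) : ℝ × ℝ := (-w.2, w.1)

/-- The symmetric tensor `w² = (w1², w1 w2, w2²)`, identified with a vector in `ℝ³`. -/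
def tsq (w : ℝ × ℝ) : Fin 3 → ℝ := ![w.1 ^ 2, w.1 * w.2, w.2 ^ 2]

/-- The symmetric tensor `w ⊙ w^⊥ = (−w1 w2, (w1² − w2²)/2, w1 w2)`. -/
def todot (w : ℝ × ℝ) : Fin 3 → ℝ := ![-(w.1 * w.2), (w.1 ^ 2 - w.2 ^ 2) / 2, w.1 * w.2]

/-- The vector `γ(ξ) = −Σᵢ cᵢ γᵢ² / (ξ·γᵢ)`. -/
def gammaVec (m : ℕ) (γ : Fin m → ℝ × ℝ) (c : Fin m → ℝ) (ξ : ℝ × ℝ) : Fin 3 → ℝ :=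
  -∑ i : Fin m, (c i / dot2 ξ (γ i)) • tsq (γ i)

/-- The vector `γ†(ξ) = −Σᵢ cᵢ (γᵢ ⊙ γᵢ^⊥) / (ξ·γᵢ)`. -/
def gammaDag (m : ℕ) (γ : Fin m → ℝ × ℝ) (c : Fin m → ℝ) (ξ : ℝ × ℝ) : Fin 3 → ℝ :=
  -∑ i : Fin m, (c i / dot2 ξ (γ i)) • todot (γ i)

/-- The vector `γ^⊥(ξ) = −Σᵢ cᵢ (γᵢ^⊥)² / (ξ·γᵢ)`. -/
def gammaPerp (m : ℕ) (γ : Fin m → ℝ × ℝ) (c : Fin m → ℝ) (ξ : ℝ × ℝ) : Fin 3 → ℝ :=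
  -∑ i : Fin m, (c i / dot2 ξ (γ i)) • tsq (perp2 (γ i))

/-- the zero sets of `γ(ξ)` and `γ^⊥(ξ)` coincide and are contained in
the zero set of `γ†(ξ)`. -/
theorem zero_sets_of_gamma
    (m : ℕ) (hm : 1 ≤ m) (γ : Fin m → ℝ × ℝ) (c : Fin m → ℝ)
    (hunit : ∀ i, (γ i).1 ^ 2 + (γ i).2 ^ 2 = 1)
    (hdist : Function.Injective γ)
    (hc : ∀ i, c i ≠ 0)
    (ξ : ℝ × ℝ) (hξ : ξ.1 ^ 2 + ξ.2 ^ 2 = 1)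
    (hξγ : ∀ i, dot2 ξ (γ i) ≠ 0) :
    (gammaVec m γ c ξ = 0 ↔ gammaPerp m γ c ξ = 0) ∧
      (gammaVec m γ c ξ = 0 → gammaDag m γ c ξ = 0) := by
  set S0 := ∑ i, (c i / dot2 ξ (γ i)) * (γ i).1 ^ 2 with hS0
  set S1 := ∑ i, (c i / dot2 ξ (γ i)) * ((γ i).1 * (γ i).2) with hS1
  set S2 := ∑ i, (c i / dot2 ξ (γ i)) * (γ i).2 ^ 2 with hS2
  have hfun : ∀ f : Fin 3 → ℝ, f = 0 ↔ (f 0 = 0 ∧ f 1 = 0 ∧ f 2 = 0) := by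
    intro f
    refine ⟨fun h => by simp [h], fun ⟨h0, h1, h2⟩ => funext fun k => ?_⟩
    fin_cases k
    · exact h0
    · exact h1
    · exact h2
  have hV0 : gammaVec m γ c ξ 0 = -S0 := by
    simp [gammaVec, tsq, hS0]
  have hV1 : gammaVec m γ c ξ 1 = -S1 := by
    simp [gammaVec, tsq, hS1]
  have hV2 : gammaVec m γ c ξ 2 = -S2 := by
    simp [gammaVec, tsq, hS2]
  have hP0 : gammaPerp m γ c ξ 0 = -S2 := by
    simp [gammaPerp, perp2, tsq, hS2]
  have hP1 : gammaPerp m γ c ξ 1 = S1 := by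
    simp only [gammaPerp, perp2, tsq, Pi.neg_apply, Finset.sum_apply, Pi.smul_apply,
      smul_eq_mul, Matrix.cons_val_one, Matrix.head_cons, Matrix.cons_val_zero]
    rw [hS1, neg_eq_iff_eq_neg, ← Finset.sum_neg_distrib]
    exact Finset.sum_congr rfl fun i _ => by ring
  have hP2 : gammaPerp m γ c ξ 2 = -S0 := by
    simp [gammaPerp, perp2, tsq, hS0]
  have hD0 : gammaDag m γ c ξ 0 = S1 := by
    simp only [gammaDag, todot, Pi.neg_apply, Finset.sum_apply, Pi.smul_apply,
      smul_eq_mul, Matrix.cons_val_zero]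
    rw [hS1, neg_eq_iff_eq_neg, ← Finset.sum_neg_distrib]
    exact Finset.sum_congr rfl fun i _ => by ring
  have hD1 : gammaDag m γ c ξ 1 = (S2 - S0) / 2 := by
    simp only [gammaDag, todot, Pi.neg_apply, Finset.sum_apply, Pi.smul_apply,
      smul_eq_mul, Matrix.cons_val_one, Matrix.head_cons, Matrix.cons_val_zero]
    rw [hS0, hS2, ← Finset.sum_sub_distrib, Finset.sum_div, neg_eq_iff_eq_neg,
      ← Finset.sum_neg_distrib]
    exact Finset.sum_congr rfl fun i _ => by ring
  have hD2 : gammaDag m γ c ξ 2 = -S1 := by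
    simp only [gammaDag, todot, Pi.neg_apply, Finset.sum_apply, Pi.smul_apply,
      smul_eq_mul, Matrix.cons_val_two, Matrix.tail_cons, Matrix.head_cons]
    rw [hS1]
  constructor
  · rw [hfun, hfun, hV0, hV1, hV2, hP0, hP1, hP2]
    constructor
    · rintro ⟨h0, h1, h2⟩; refine ⟨h2, by linarith [neg_eq_zero.mp h1], h0⟩
    · rintro ⟨h0, h1, h2⟩; exact ⟨h2, by simp [h1], h0⟩
  · rw [hfun, hfun, hV0, hV1, hV2, hD0, hD1, hD2]
    rintro ⟨h0, h1, h2⟩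
    have e0 : S0 = 0 := by linarith [neg_eq_zero.mp h0]
    have e1 : S1 = 0 := neg_eq_zero.mp h1
    have e2 : S2 = 0 := neg_eq_zero.mp h2
    refine ⟨e1, by rw [e0, e2]; ring, by rw [e1]; ring⟩
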